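/- arXiv:1107.4704 — 2 statements merged into one kernel-verified Lean document; each statement's English description precedes it below -/
import Mathlib

section
/- Let κ > 0, let G, g be positive increasing functions with G(1) ≥ 1, g(1) ≥ 1, let ω ∈ NR(κ,G), α ∈ ℂ, and N ≥ 1 an integer. If there exists m ∈ ℤ^d with 0 < |m| ≤ N and |α − iπ⟨m,ω⟩| < κ/(4 G(N) g(|m|)), then for all m' ∈ ℤ^d with 0 < |m'| ≤ N one has |α − iπ⟨m+m',ω⟩| ≥ κ/(G(N) g(|m'|)); in particular α − iπ⟨m,ω⟩ ∈ NR^N_ω(κ/G(N), g). -/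
open scoped BigOperators

/-- `⟨m,ω⟩ = ∑ m_j ω_j`. -/
noncomputable def zdot {d : ℕ} (m : Fin d → ℤ) (ω : Fin d → ℝ) : ℝ :=
  ∑ j, (m j : ℝ) * ω j

/-- `|m| = ∑ |m_j|`, as a real number. -/
noncomputable def znorm {d : ℕ} (m : Fin d → ℤ) : ℝ := ((∑ j, |m j| : ℤ) : ℝ)

lemma znorm_one_le {d : ℕ} {m : Fin d → ℤ} (hm : m ≠ 0) : (1 : ℝ) ≤ znorm m := by
  obtain ⟨j, hj⟩ : ∃ j, m j ≠ 0 := by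
    by_contra h
    push_neg at h
    exact hm (funext h)
  have : (1 : ℤ) ≤ ∑ j, |m j| :=
    le_trans (Int.one_le_abs hj)
      (Finset.single_le_sum (f := fun i => |m i|) (fun i _ => abs_nonneg _) (Finset.mem_univ j))
  unfold znorm
  exact_mod_cast this

lemma zdot_add {d : ℕ} (m m' : Fin d → ℤ) (ω : Fin d → ℝ) :
    zdot (m + m') ω = zdot m ω + zdot m' ω := by
  unfold zdot
  rw [← Finset.sum_add_distrib]
  congr 1; funext j
  push_cast [Pi.add_apply]
  ring

lemma norm_pi_I_mul (x : ℝ) : ‖(Real.pi : ℂ) * Complex.I * (x : ℂ)‖ = Real.pi * |x| := by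
  simp [abs_of_pos Real.pi_pos, Real.norm_eq_abs]

/-- if `ω ∈ NR(κ,G)` and `α` is `κ/(4G(N)g(|m|))`-close to
`iπ⟨m,ω⟩` for some `0 < |m| ≤ N`, then for every `m'` with `0 < |m'| ≤ N`,
`|α − iπ⟨m+m',ω⟩| ≥ κ/(G(N)g(|m'|))`; in particular
`α − iπ⟨m,ω⟩ ∈ NR^N_ω(κ/G(N), g)`. -/
theorem stmt4 {d : ℕ} (κ : ℝ) (hκ : 0 < κ) (G g : ℝ → ℝ)
    (hGpos : ∀ t ≥ (1 : ℝ), 0 < G t) (hgpos : ∀ t ≥ (1 : ℝ), 0 < g t)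
    (hGmono : MonotoneOn G (Set.Ici 1)) (hgmono : MonotoneOn g (Set.Ici 1))
    (hG1 : 1 ≤ G 1) (hg1 : 1 ≤ g 1)
    (ω : Fin d → ℝ)
    (hω : ∀ m : Fin d → ℤ, m ≠ 0 → κ / G (znorm m) ≤ |zdot m ω|)
    (α : ℂ) (N : ℕ) (hN : 1 ≤ N)
    (m : Fin d → ℤ) (hm0 : m ≠ 0) (hmN : znorm m ≤ N)
    (hres : ‖α - (Real.pi : ℂ) * Complex.I * (zdot m ω : ℂ)‖
      < κ / (4 * G N * g (znorm m))) :
    (∀ m' : Fin d → ℤ, m' ≠ 0 → znorm m' ≤ N →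
      κ / (G N * g (znorm m')) ≤
        ‖α - (Real.pi : ℂ) * Complex.I * (zdot (m + m') ω : ℂ)‖) ∧
    (∀ m' : Fin d → ℤ, m' ≠ 0 → znorm m' ≤ N →
      κ / (G N * g (znorm m')) ≤
        ‖(α - (Real.pi : ℂ) * Complex.I * (zdot m ω : ℂ))
          - (Real.pi : ℂ) * Complex.I * (zdot m' ω : ℂ)‖) := by
  have hN1 : (1 : ℝ) ≤ (N : ℝ) := by exact_mod_cast hN
  have h1m : (1 : ℝ) ≤ znorm m := znorm_one_le hm0
  have hGN : 0 < G N := hGpos _ hN1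
  have hgm : 1 ≤ g (znorm m) :=
    le_trans hg1 (hgmono (Set.mem_Ici.mpr le_rfl) (Set.mem_Ici.mpr h1m) h1m)
  have key : ∀ m' : Fin d → ℤ, m' ≠ 0 → znorm m' ≤ N →
      κ / (G N * g (znorm m')) ≤
        ‖(α - (Real.pi : ℂ) * Complex.I * (zdot m ω : ℂ))
          - (Real.pi : ℂ) * Complex.I * (zdot m' ω : ℂ)‖ := by
    intro m' hm'0 hm'N
    have h1 : (1 : ℝ) ≤ znorm m' := znorm_one_le hm'0
    have hGm' : 0 < G (znorm m') := hGpos _ h1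
    have hGle : G (znorm m') ≤ G N :=
      hGmono (Set.mem_Ici.mpr h1) (Set.mem_Ici.mpr hN1) hm'N
    have hg' : 1 ≤ g (znorm m') :=
      le_trans hg1 (hgmono (Set.mem_Ici.mpr le_rfl) (Set.mem_Ici.mpr h1) h1)
    set X := α - (Real.pi : ℂ) * Complex.I * (zdot m ω : ℂ) with hX
    set Y := (Real.pi : ℂ) * Complex.I * (zdot m' ω : ℂ) with hY
    have hlow : ‖Y‖ - ‖X‖ ≤ ‖X - Y‖ := by
      have h := norm_sub_norm_le Y X
      rwa [norm_sub_rev Y X] at h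
    have hYn : ‖Y‖ = Real.pi * |zdot m' ω| := norm_pi_I_mul _
    have hzd : κ / G (znorm m') ≤ |zdot m' ω| := hω m' hm'0
    -- set c := κ / G N
    have hc : 0 < κ / G N := div_pos hκ hGN
    have h1' : κ / G N ≤ κ / G (znorm m') := by
      gcongr
    have hpi : (3 : ℝ) ≤ Real.pi := Real.pi_gt_three.le
    have hAle : ‖X‖ ≤ κ / (4 * G N) := by
      refine le_trans hres.le ?_
      apply div_le_div_of_nonneg_left hκ.le (by positivity)
      nlinarith
    have htgt : κ / (G N * g (znorm m')) ≤ κ / G N := by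
      apply div_le_div_of_nonneg_left hκ.le hGN
      nlinarith
    have hYlb : 3 * (κ / G N) ≤ ‖Y‖ := by
      rw [hYn]
      calc 3 * (κ / G N) ≤ Real.pi * (κ / G (znorm m')) := by
            apply mul_le_mul hpi h1' hc.le (by linarith)
        _ ≤ Real.pi * |zdot m' ω| := by
            apply mul_le_mul_of_nonneg_left hzd Real.pi_pos.le
    have h4 : κ / (4 * G N) = (κ / G N) / 4 := by ring
    refine le_trans ?_ hlow
    rw [h4] at hAle
    linarith
  refine ⟨fun m' hm'0 hm'N => ?_, key⟩
  have := key m' hm'0 hm'N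
  rw [zdot_add]
  push_cast
  convert this using 2
  ring
end

section
/- Let κ > 0, G, g positive increasing with G(1) ≥ 1, g(1) ≥ 1, ω ∈ NR(κ,G), α ∈ ℂ, N ≥ 1. Then there exists m ∈ ℤ^d with |m| ≤ N such that α − iπ⟨m,ω⟩ ∈ NR^N_ω(κ/(4G(N)), g); moreover, if this m is nonzero then |α − iπ⟨m,ω⟩| < κ/(4G(N)g(|m|)). -/
open scoped BigOperators

lemma pi_smul_norm {x : ℝ} : ‖(Real.pi : ℂ) * Complex.I * (x : ℂ)‖ = Real.pi * |x| := by
  simp [norm_mul, Complex.norm_real, Complex.norm_I, Real.norm_eq_abs,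
    abs_of_pos Real.pi_pos]

/-- Lemma on uniqueness of resonances: for `ω ∈ NR(κ,G)`,
`α ∈ ℂ` and `N ≥ 1`, there is `m ∈ ℤ^d` with `|m| ≤ N` such that
`α − iπ⟨m,ω⟩ ∈ NR^N_ω(κ/(4G(N)), g)`; moreover if `m ≠ 0` then
`|α − iπ⟨m,ω⟩| < κ/(4G(N)g(|m|))`. -/
theorem stmt5 {d : ℕ} (κ : ℝ) (hκ : 0 < κ) (G g : ℝ → ℝ)
    (hGpos : ∀ t ≥ (1 : ℝ), 0 < G t) (hgpos : ∀ t ≥ (1 : ℝ), 0 < g t)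
    (hGmono : MonotoneOn G (Set.Ici 1)) (hgmono : MonotoneOn g (Set.Ici 1))
    (hG1 : 1 ≤ G 1) (hg1 : 1 ≤ g 1)
    (ω : Fin d → ℝ)
    (hω : ∀ m : Fin d → ℤ, m ≠ 0 → κ / G (znorm m) ≤ |zdot m ω|)
    (α : ℂ) (N : ℕ) (hN : 1 ≤ N) :
    ∃ m : Fin d → ℤ, znorm m ≤ N ∧
      (∀ m' : Fin d → ℤ, m' ≠ 0 → znorm m' ≤ N →
        κ / (4 * G N) / g (znorm m') ≤
          ‖(α - (Real.pi : ℂ) * Complex.I * (zdot m ω : ℂ))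
            - (Real.pi : ℂ) * Complex.I * (zdot m' ω : ℂ)‖) ∧
      (m ≠ 0 →
        ‖α - (Real.pi : ℂ) * Complex.I * (zdot m ω : ℂ)‖
          < κ / (4 * G N * g (znorm m))) := by
  have hNr : (1 : ℝ) ≤ (N : ℝ) := by exact_mod_cast hN
  have hGN : 0 < G N := hGpos _ hNr
  by_cases h : ∀ m' : Fin d → ℤ, m' ≠ 0 → znorm m' ≤ N →
      κ / (4 * G N) / g (znorm m') ≤
        ‖(α - (Real.pi : ℂ) * Complex.I * (zdot (0 : Fin d → ℤ) ω : ℂ))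
          - (Real.pi : ℂ) * Complex.I * (zdot m' ω : ℂ)‖
  · refine ⟨0, ?_, h, fun h0 => absurd rfl h0⟩
    have : znorm (0 : Fin d → ℤ) = 0 := by simp [znorm]
    rw [this]
    exact_mod_cast Nat.zero_le N
  · push_neg at h
    obtain ⟨m, hm0, hmN, hlt⟩ := h
    have hz0 : zdot (0 : Fin d → ℤ) ω = 0 := by simp [zdot]
    set β := α - (Real.pi : ℂ) * Complex.I * (zdot m ω : ℂ) with hβ
    have hβlt : ‖β‖ < κ / (4 * G N) / g (znorm m) := by
      rw [hz0] at hlt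
      simpa [hβ, sub_sub] using hlt
    have hm1 : (1 : ℝ) ≤ znorm m := znorm_one_le hm0
    have hgm : (1 : ℝ) ≤ g (znorm m) :=
      hg1.trans (hgmono (Set.mem_Ici.mpr le_rfl) (Set.mem_Ici.mpr hm1) hm1)
    have hβlt' : ‖β‖ < κ / (4 * G N) :=
      hβlt.trans_le (div_le_self (le_of_lt (div_pos hκ (by positivity))) hgm)
    refine ⟨m, hmN, ?_, fun _ => by rwa [div_div] at hβlt⟩
    intro m' hm'0 hm'N
    have h1 : (1 : ℝ) ≤ znorm m' := znorm_one_le hm'0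
    have hG' : 0 < G (znorm m') := hGpos _ h1
    have hGle : G (znorm m') ≤ G N :=
      hGmono (Set.mem_Ici.mpr h1) (Set.mem_Ici.mpr hNr) hm'N
    have hg' : (1 : ℝ) ≤ g (znorm m') :=
      hg1.trans (hgmono (Set.mem_Ici.mpr le_rfl) (Set.mem_Ici.mpr h1) h1)
    have hβle : ‖β‖ ≤ κ / (4 * G (znorm m')) := by
      refine hβlt'.le.trans ?_
      gcongr
    have hπ : (3 : ℝ) * (κ / G (znorm m')) ≤
        ‖(Real.pi : ℂ) * Complex.I * (zdot m' ω : ℂ)‖ := by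
      rw [pi_smul_norm]
      have hd := hω m' hm'0
      nlinarith [Real.pi_gt_three, div_pos hκ hG', abs_nonneg (zdot m' ω)]
    have htri : ‖(Real.pi : ℂ) * Complex.I * (zdot m' ω : ℂ)‖ - ‖β‖ ≤
        ‖β - (Real.pi : ℂ) * Complex.I * (zdot m' ω : ℂ)‖ := by
      calc ‖(Real.pi : ℂ) * Complex.I * (zdot m' ω : ℂ)‖ - ‖β‖
          ≤ ‖(Real.pi : ℂ) * Complex.I * (zdot m' ω : ℂ) - β‖ := norm_sub_norm_le _ _
        _ = ‖β - (Real.pi : ℂ) * Complex.I * (zdot m' ω : ℂ)‖ := norm_sub_rev _ _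
    have hkG' : 0 < κ / G (znorm m') := div_pos hκ hG'
    calc κ / (4 * G N) / g (znorm m')
        ≤ κ / (4 * G N) :=
          div_le_self (le_of_lt (div_pos hκ (by positivity))) hg'
      _ ≤ κ / (4 * G (znorm m')) := by gcongr
      _ ≤ 3 * (κ / G (znorm m')) - κ / (4 * G (znorm m')) := by
          rw [show (4 : ℝ) * G (znorm m') = G (znorm m') * 4 by ring,
            ← div_div]
          linarith
      _ ≤ ‖(Real.pi : ℂ) * Complex.I * (zdot m' ω : ℂ)‖ - ‖β‖ := by
          have := hβle
          rw [show (4 : ℝ) * G (znorm m') = G (znorm m') * 4 by ring, ← div_div] at this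
          linarith
      _ ≤ ‖β - (Real.pi : ℂ) * Complex.I * (zdot m' ω : ℂ)‖ := htri
end
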